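/- Let ψ : ℝ → ℝ be continuous and strictly monotone increasing on (0, ∞), with ψ(x) → −∞ as x → 0⁺, and interval integrable on [0, 1]. Define H(p) = ∫_1^p ψ(t) dt for p ≥ 0, and for a nonempty finite set 𝒯, D(x, y) = Σ_τ [H(x_τ) − H(y_τ) − ψ(y_τ)(x_τ − y_τ)]. Let r : 𝒯 → ℝ, β > 0, and π_ref ∈ Δ(𝒯) with π_ref(τ) > 0 for all τ. Suppose π* ∈ Δ(𝒯) maximizes f(π) = Σ_τ π_τ r(τ) − β D(π, π_ref) over Δ(𝒯) and additionally satisfies π*(τ) > 0 for all τ. Then the function τ ↦ r(τ) − β ψ(π*(τ)) + β ψ(π_ref(τ)) is constant on 𝒯, i.e., there exists c ∈ ℝ such that r(τ) = β (ψ(π*(τ)) − ψ(π_ref(τ))) + c for all τ. -/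

import Mathlib

open Filter Set MeasureTheory

/-- Interior first-order (KKT stationarity) step: if π* ∈ Δ(𝒯) maximizes
f(π) = Σ_τ π_τ r(τ) − β D(π, π_ref) over Δ(𝒯) and has full support, then
τ ↦ r(τ) − β ψ(π*(τ)) + β ψ(π_ref(τ)) is constant, i.e. there exists c ∈ ℝ with
r(τ) = β (ψ(π*(τ)) − ψ(π_ref(τ))) + c for all τ. -/
theorem interior_stationarity_reward_identity
    {𝒯 : Type*} [Fintype 𝒯] [Nonempty 𝒯]
    (ψ : ℝ → ℝ)
    (hψcont : ContinuousOn ψ (Set.Ioi (0 : ℝ)))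
    (hψmono : StrictMonoOn ψ (Set.Ioi (0 : ℝ)))
    (hψtend : Filter.Tendsto ψ (nhdsWithin 0 (Set.Ioi (0 : ℝ))) Filter.atBot)
    (hψint : IntervalIntegrable ψ MeasureTheory.volume 0 1)
    (H : ℝ → ℝ) (hH : ∀ p : ℝ, 0 ≤ p → H p = ∫ t in (1 : ℝ)..p, ψ t)
    (D : (𝒯 → ℝ) → (𝒯 → ℝ) → ℝ)
    (hD : ∀ x y : 𝒯 → ℝ, D x y = ∑ τ, (H (x τ) - H (y τ) - ψ (y τ) * (x τ - y τ)))
    (r : 𝒯 → ℝ) (β : ℝ) (hβ : 0 < β)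
    (πref : 𝒯 → ℝ) (hrefpos : ∀ τ, 0 < πref τ) (hrefsum : ∑ τ, πref τ = 1)
    (f : (𝒯 → ℝ) → ℝ)
    (hf : ∀ π : 𝒯 → ℝ, f π = ∑ τ, π τ * r τ - β * D π πref)
    (πstar : 𝒯 → ℝ) (hstar_nonneg : ∀ τ, 0 ≤ πstar τ) (hstar_sum : ∑ τ, πstar τ = 1)
    (hstar_pos : ∀ τ, 0 < πstar τ)
    (hmax : ∀ π : 𝒯 → ℝ, (∀ τ, 0 ≤ π τ) → (∑ τ, π τ = 1) → f π ≤ f πstar) :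
    ∃ c : ℝ, ∀ τ, r τ = β * (ψ (πstar τ) - ψ (πref τ)) + c := by
  classical
  -- H has derivative ψ p at every p > 0
  have hHderiv : ∀ p : ℝ, 0 < p → HasDerivAt H (ψ p) p := by
    intro p hp
    have hsub : Set.uIcc (1 : ℝ) p ⊆ Set.Ioi (0 : ℝ) := by
      intro t ht
      have h1 := ht.1
      have : (0 : ℝ) < min 1 p := lt_min one_pos hp
      exact lt_of_lt_of_le this h1
    have hint : IntervalIntegrable ψ volume 1 p :=
      (hψcont.mono hsub).intervalIntegrable
    have hmeas : StronglyMeasurableAtFilter ψ (nhds p) volume :=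
      hψcont.stronglyMeasurableAtFilter isOpen_Ioi p hp
    have hcont : ContinuousAt ψ p :=
      hψcont.continuousAt (Ioi_mem_nhds hp)
    have hF : HasDerivAt (fun u => ∫ t in (1 : ℝ)..u, ψ t) (ψ p) p :=
      intervalIntegral.integral_hasDerivAt_right hint hmeas hcont
    refine hF.congr_of_eventuallyEq ?_
    filter_upwards [Ioi_mem_nhds hp] with q hq
    exact hH q (le_of_lt hq)
  -- f as a sum of per-coordinate functions
  set G : 𝒯 → ℝ → ℝ := fun τ p =>
    p * r τ - β * (H p - H (πref τ) - ψ (πref τ) * (p - πref τ)) with hG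
  have hfG : ∀ π : 𝒯 → ℝ, f π = ∑ τ, G τ (π τ) := by
    intro π
    rw [hf, hD, Finset.mul_sum, ← Finset.sum_sub_distrib]
  -- key : the quantity is constant
  have key : ∀ a b : 𝒯, a ≠ b →
      r a - β * ψ (πstar a) + β * ψ (πref a)
        = r b - β * ψ (πstar b) + β * ψ (πref b) := by
    intro a b hab
    set u : ℝ → 𝒯 → ℝ := fun ε τ =>
      πstar τ + ((if τ = a then ε else 0) + (if τ = b then -ε else 0)) with hu
    have hua : ∀ ε, u ε a = πstar a + ε := by
      intro ε; simp [hu, hab]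
    have hub : ∀ ε, u ε b = πstar b - ε := by
      intro ε; simp [hu, Ne.symm hab]; ring
    have huc : ∀ ε τ, τ ≠ a → τ ≠ b → u ε τ = πstar τ := by
      intro ε τ h1 h2; simp [hu, h1, h2]
    have husum : ∀ ε, ∑ τ, u ε τ = 1 := by
      intro ε
      simp only [hu]
      rw [Finset.sum_add_distrib, Finset.sum_add_distrib, hstar_sum,
        Finset.sum_ite_eq' Finset.univ a (fun _ => ε),
        Finset.sum_ite_eq' Finset.univ b (fun _ => -ε)]
      simp
    -- the explicit one-variable function
    set φ : ℝ → ℝ := fun ε => f πstar + (ε * (r a - r b)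
        - β * (H (πstar a + ε) - H (πstar a) - ψ (πref a) * ε
              + (H (πstar b - ε) - H (πstar b)) + ψ (πref b) * ε)) with hφ
    have hfu : ∀ ε : ℝ, f (u ε) = φ ε := by
      intro ε
      have hdiff : f (u ε) - f πstar = ∑ τ, (G τ (u ε τ) - G τ (πstar τ)) := by
        rw [hfG, hfG, ← Finset.sum_sub_distrib]
      have hsum : ∑ τ, (G τ (u ε τ) - G τ (πstar τ))
          = (G a (u ε a) - G a (πstar a)) + (G b (u ε b) - G b (πstar b)) := by
        refine Finset.sum_eq_add_of_mem a b (Finset.mem_univ a) (Finset.mem_univ b) hab ?_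
        intro c _ ⟨h1, h2⟩
        rw [huc ε c h1 h2]; ring
      rw [hua, hub] at hsum
      have : f (u ε) - f πstar = φ ε - f πstar := by
        rw [hdiff, hsum, hφ, hG]; ring
      linarith
    have hφ0 : φ 0 = f πstar := by simp [hφ]
    -- local maximum of φ at 0
    have hlocmax : IsLocalMax φ 0 := by
      have hmem : Set.Ioo (-(πstar a)) (πstar b) ∈ nhds (0 : ℝ) :=
        Ioo_mem_nhds (neg_lt_zero.mpr (hstar_pos a)) (hstar_pos b)
      rw [IsLocalMax, IsMaxFilter]
      filter_upwards [hmem] with ε hε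
      rw [hφ0, ← hfu]
      refine hmax (u ε) ?_ (husum ε)
      intro τ
      by_cases h1 : τ = a
      · subst h1; rw [hua]; linarith [hε.1]
      by_cases h2 : τ = b
      · subst h2; rw [hub]; linarith [hε.2]
      · rw [huc ε τ h1 h2]; exact hstar_nonneg τ
    -- derivative of φ at 0
    have hda : HasDerivAt (fun ε : ℝ => H (πstar a + ε)) (ψ (πstar a)) 0 := by
      have hinner : HasDerivAt (fun ε : ℝ => πstar a + ε) 1 0 :=
        (hasDerivAt_id 0).const_add (πstar a)
      have houter : HasDerivAt H (ψ (πstar a)) ((fun ε : ℝ => πstar a + ε) 0) := by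
        simpa using hHderiv (πstar a) (hstar_pos a)
      have := houter.comp 0 hinner
      rw [mul_one] at this
      exact this
    have hdb : HasDerivAt (fun ε : ℝ => H (πstar b - ε)) (-ψ (πstar b)) 0 := by
      have hinner : HasDerivAt (fun ε : ℝ => πstar b - ε) (-1) 0 := by
        simpa using (hasDerivAt_id (0 : ℝ)).const_sub (πstar b)
      have houter : HasDerivAt H (ψ (πstar b)) ((fun ε : ℝ => πstar b - ε) 0) := by
        simpa using hHderiv (πstar b) (hstar_pos b)
      have := houter.comp 0 hinner
      rw [mul_neg_one] at this
      exact this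
    have hlin1 : HasDerivAt (fun ε : ℝ => ε * (r a - r b)) (r a - r b) 0 := by
      simpa using (hasDerivAt_id (0 : ℝ)).mul_const (r a - r b)
    have l1 : HasDerivAt (fun ε : ℝ => ψ (πref a) * ε) (ψ (πref a)) 0 := by
      simpa using (hasDerivAt_id (0 : ℝ)).const_mul (ψ (πref a))
    have l2 : HasDerivAt (fun ε : ℝ => ψ (πref b) * ε) (ψ (πref b)) 0 := by
      simpa using (hasDerivAt_id (0 : ℝ)).const_mul (ψ (πref b))
    have hB : HasDerivAt (fun ε : ℝ => H (πstar a + ε) - H (πstar a) - ψ (πref a) * ε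
          + (H (πstar b - ε) - H (πstar b)) + ψ (πref b) * ε)
        (ψ (πstar a) - ψ (πref a) + -ψ (πstar b) + ψ (πref b)) 0 := by
      have := (((hda.sub_const (H (πstar a))).sub l1).add (hdb.sub_const (H (πstar b)))).add l2
      exact this
    have hd : HasDerivAt φ
        ((r a - r b) - β * (ψ (πstar a) - ψ (πref a) + -ψ (πstar b) + ψ (πref b))) 0 := by
      have := (hlin1.sub (hB.const_mul β)).const_add (f πstar)
      exact this
    have h0 := hlocmax.hasDerivAt_eq_zero hd
    linear_combination h0
  obtain ⟨τ₀⟩ := (inferInstance : Nonempty 𝒯)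
  refine ⟨r τ₀ - β * ψ (πstar τ₀) + β * ψ (πref τ₀), ?_⟩
  intro τ
  by_cases h : τ = τ₀
  · subst h; ring
  · have := key τ τ₀ h
    linarith
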